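/- For every linear order L: L is a well-order if and only if ℤ[L] is scattered. -/

import Mathlib

universe u v w x

/-- A (strict order) relation is scattered: it has no suborder isomorphic to `ℚ`. -/
def IsScatteredRel {X : Type u} (r : X → X → Prop) : Prop :=
  ¬∃ f : ℚ → X, ∀ q q' : ℚ, q < q' ↔ r (f q) (f q')

/-- The backwards-lexicographic strict order on `ℤ[L]`, the finitely supported functions
`L → ℤ`: `a ≺* b` iff `a ℓ < b ℓ` at the `L`-greatest `ℓ` where `a` and `b` differ. -/
def zlex {L : Type u} [LinearOrder L] (a b : L →₀ ℤ) : Prop :=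
  ∃ ℓ : L, a ℓ < b ℓ ∧ ∀ ℓ' : L, ℓ < ℓ' → a ℓ' = b ℓ'

section Aux

variable {L : Type u} [LinearOrder L]

lemma zlex_asymm {a b : L →₀ ℤ} (h : zlex a b) (h' : zlex b a) : False := by
  obtain ⟨ℓ₁, h1, h2⟩ := h
  obtain ⟨ℓ₂, h3, h4⟩ := h'
  rcases lt_trichotomy ℓ₁ ℓ₂ with hl | hl | hl
  · have := h2 ℓ₂ hl; omega
  · subst hl; omega
  · have := h4 ℓ₁ hl; omega

lemma zlex_irrefl (a : L →₀ ℤ) : ¬ zlex a a := fun ⟨_, h, _⟩ => lt_irrefl _ h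

instance : Countable (Lex (ℕ →₀ ℤ)) := Countable.of_equiv _ toLex

instance : DenselyOrdered (Lex (ℕ →₀ ℤ)) := by
  constructor
  intro x y hxy
  obtain ⟨n, hn, hlt⟩ := Finsupp.Lex.lt_iff.mp hxy
  refine ⟨toLex (ofLex x + Finsupp.single (n + 1) 1), ?_, ?_⟩
  · rw [Finsupp.Lex.lt_iff]
    refine ⟨n + 1, fun j hj => ?_, by simp⟩
    simp only [ofLex_toLex, Finsupp.add_apply, Finsupp.single_apply]
    rw [if_neg (by omega)]
    simp
  · rw [Finsupp.Lex.lt_iff]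
    refine ⟨n, fun j hj => ?_, ?_⟩
    · rw [← hn j hj]
      simp only [ofLex_toLex, Finsupp.add_apply, Finsupp.single_apply]
      rw [if_neg (by omega)]
      simp
    · simpa [Finsupp.single_apply] using hlt

instance : NoMaxOrder (Lex (ℕ →₀ ℤ)) := by
  constructor
  intro x
  refine ⟨toLex (ofLex x + Finsupp.single 0 1), Finsupp.Lex.lt_iff.mpr
    ⟨0, fun j hj => absurd hj (Nat.not_lt_zero j), by simp⟩⟩

instance : NoMinOrder (Lex (ℕ →₀ ℤ)) := by
  constructor
  intro x
  refine ⟨toLex (ofLex x - Finsupp.single 0 1), Finsupp.Lex.lt_iff.mpr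
    ⟨0, fun j hj => absurd hj (Nat.not_lt_zero j), by simp⟩⟩

end Aux

/-- A linear order `L` is a well-order if and only if `ℤ[L]` is scattered. -/
theorem wellOrder_iff_zlex_scattered (L : Type u) [LinearOrder L] :
    WellFoundedLT L ↔ IsScatteredRel (zlex (L := L)) := by
  classical
  constructor
  · -- well-founded ⇒ scattered
    rintro hwf ⟨f, hf⟩
    -- the top difference point
    have h01 : zlex (f 0) (f 1) := (hf 0 1).1 (by norm_num)
    obtain ⟨ℓ₀, -, -⟩ := h01
    have exD : ∀ {q q' : ℚ}, q < q' → ∃ ℓ,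
        f q ℓ < f q' ℓ ∧ ∀ ℓ', ℓ < ℓ' → f q ℓ' = f q' ℓ' := fun h => (hf _ _).1 h
    let D : ℚ → ℚ → L := fun q q' => if h : q < q' then (exD h).choose else ℓ₀
    have hD : ∀ {q q' : ℚ} (h : q < q'),
        f q (D q q') < f q' (D q q') ∧ ∀ ℓ', D q q' < ℓ' → f q ℓ' = f q' ℓ' := by
      intro q q' h
      simp only [D, dif_pos h]
      exact (exD h).choose_spec
    -- the top difference of a subinterval is at most that of the interval
    have hA : ∀ a b q : ℚ, a < q → q < b → D a q ≤ D a b ∧ D q b ≤ D a b := by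
      intro a b q haq hqb
      have hab : a < b := haq.trans hqb
      obtain ⟨w1, w2⟩ := hD hab
      obtain ⟨u1, u2⟩ := hD haq
      obtain ⟨v1, v2⟩ := hD hqb
      constructor
      · by_contra hc
        push_neg at hc
        rcases lt_trichotomy (D q b) (D a q) with h | h | h
        · have e1 : f q (D a q) = f b (D a q) := v2 _ h
          have e2 : f a (D a q) = f b (D a q) := w2 _ hc
          omega
        · rw [h] at v1
          have e2 : f a (D a q) = f b (D a q) := w2 _ hc
          omega
        · have e1 : f a (D q b) = f q (D q b) := u2 _ h
          have e2 : f a (D q b) = f b (D q b) := w2 _ (hc.trans h)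
          omega
      · by_contra hc
        push_neg at hc
        rcases lt_trichotomy (D a q) (D q b) with h | h | h
        · have e1 : f a (D q b) = f q (D q b) := u2 _ h
          have e2 : f a (D q b) = f b (D q b) := w2 _ hc
          omega
        · rw [h] at u1
          have e2 : f a (D q b) = f b (D q b) := w2 _ hc
          omega
        · have e1 : f q (D a q) = f b (D a q) := v2 _ h
          have e2 : f a (D a q) = f b (D a q) := w2 _ (hc.trans h)
          omega
    have hB : ∀ a b q q' : ℚ, a ≤ q → q < q' → q' ≤ b → D q q' ≤ D a b := by
      intro a b q q' haq hqq' hq'b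
      rcases eq_or_lt_of_le haq with rfl | haq
      · rcases eq_or_lt_of_le hq'b with rfl | hq'b
        · exact le_rfl
        · exact (hA a b q' hqq' hq'b).1
      · rcases eq_or_lt_of_le hq'b with rfl | hq'b
        · exact (hA a q' q haq hqq').2
        · exact le_trans (hA q b q' hqq' hq'b).1 (hA a b q haq (hqq'.trans hq'b)).2
    -- monotonicity of values at the top difference point
    have hM : ∀ a b q q' : ℚ, a < b → a ≤ q → q < q' → q' ≤ b →
        f q (D a b) ≤ f q' (D a b) := by
      intro a b q q' hab haq hqq' hq'b
      have hle : D q q' ≤ D a b := hB a b q q' haq hqq' hq'b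
      rcases hle.lt_or_eq with h | h
      · exact ((hD hqq').2 _ h).le
      · have := (hD hqq').1
        rw [h] at this
        exact this.le
    -- from any interval, get a subinterval with strictly smaller top difference
    have step : ∀ a b : ℚ, a < b → ∃ a' b' : ℚ, a' < b' ∧ D a' b' < D a b := by
      intro a b hab
      set w := D a b with hw
      have hfw : f a w < f b w := (hD hab).1
      set N : ℕ := (f b w - f a w).toNat with hN
      have hNZ : (N : ℤ) = f b w - f a w := Int.toNat_of_nonneg (by omega)
      set c : ℚ := (b - a) / (N + 1) with hc
      have hcpos : 0 < c := div_pos (by linarith) (by positivity)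
      set q : ℕ → ℚ := fun i => a + c * i with hq
      have hq0 : q 0 = a := by simp [hq]
      have hqN : q (N + 1) = b := by
        have hne : ((N : ℚ) + 1) ≠ 0 := by positivity
        simp only [hq, hc]
        push_cast
        field_simp
        ring
      have hqmono : ∀ i j : ℕ, i < j → q i < q j := by
        intro i j hij
        simp only [hq]
        have hij' : (i : ℚ) < j := by exact_mod_cast hij
        nlinarith
      have hqle : ∀ i : ℕ, i ≤ N + 1 → a ≤ q i ∧ q i ≤ b := by
        intro i hi
        constructor
        · rcases Nat.eq_zero_or_pos i with h | h
          · simp [h, hq0]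
          · exact le_of_lt (hq0 ▸ hqmono 0 i h)
        · rcases eq_or_lt_of_le hi with h | h
          · rw [h, hqN]
          · exact le_of_lt (hqN ▸ hqmono i (N + 1) h)
      have pig : ∃ i : ℕ, i ≤ N ∧ f (q i) w = f (q (i + 1)) w := by
        by_contra hcg
        push_neg at hcg
        have hlt : ∀ i : ℕ, i ≤ N → f (q i) w + 1 ≤ f (q (i + 1)) w := by
          intro i hi
          have h1 : f (q i) w ≤ f (q (i + 1)) w := hM a b (q i) (q (i + 1)) hab
            (hqle i (by omega)).1 (hqmono i (i + 1) (by omega)) (hqle (i + 1) (by omega)).2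
          have h2 := hcg i hi
          omega
        have hind : ∀ i : ℕ, i ≤ N + 1 → f a w + i ≤ f (q i) w := by
          intro i
          induction i with
          | zero => intro _; simp [hq0]
          | succ k ih =>
            intro hk
            have h1 := hlt k (by omega)
            have h2 := ih (by omega)
            push_cast
            push_cast at h2
            omega
        have hfin := hind (N + 1) le_rfl
        rw [hqN] at hfin
        push_cast at hfin
        omega
      obtain ⟨i, hi, heq⟩ := pig
      refine ⟨q i, q (i + 1), hqmono i (i + 1) (by omega), ?_⟩
      have hle : D (q i) (q (i + 1)) ≤ w := hB a b _ _ (hqle i (by omega)).1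
        (hqmono i (i + 1) (by omega)) (hqle (i + 1) (by omega)).2
      rcases hle.lt_or_eq with h | h
      · exact h
      · exfalso
        have := (hD (hqmono i (i + 1) (by omega))).1
        rw [h] at this
        omega
    -- build an infinite descending sequence in L
    have step' : ∀ p : {p : ℚ × ℚ // p.1 < p.2}, ∃ p' : {p : ℚ × ℚ // p.1 < p.2},
        D p'.1.1 p'.1.2 < D p.1.1 p.1.2 := by
      rintro ⟨⟨a, b⟩, hab⟩
      obtain ⟨a', b', h1, h2⟩ := step a b hab
      exact ⟨⟨(a', b'), h1⟩, h2⟩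
    choose nxt hnxt using step'
    set g : ℕ → {p : ℚ × ℚ // p.1 < p.2} := fun n => nxt^[n] ⟨(0, 1), by norm_num⟩ with hg
    have hdesc : ∀ n : ℕ, D (g (n + 1)).1.1 (g (n + 1)).1.2 < D (g n).1.1 (g n).1.2 := by
      intro n
      simp only [hg, Function.iterate_succ_apply']
      exact hnxt _
    exact RelEmbedding.not_wellFounded
      (RelEmbedding.natGT (fun n => D (g n).1.1 (g n).1.2) hdesc) hwf.wf
  · -- scattered ⇒ well-founded
    intro hsc
    by_contra hwf
    have hnw : ¬ WellFounded ((· < ·) : L → L → Prop) := fun h => hwf ⟨h⟩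
    rw [RelEmbedding.wellFounded_iff_isEmpty, not_isEmpty_iff] at hnw
    obtain ⟨e⟩ := hnw
    obtain ⟨iso⟩ := Order.iso_of_countable_dense ℚ (Lex (ℕ →₀ ℤ))
    set emb : ℕ ↪ L := e.toEmbedding with hemb
    set g : (ℕ →₀ ℤ) → (L →₀ ℤ) := Finsupp.embDomain emb with hgdef
    have key : ∀ x y : Lex (ℕ →₀ ℤ), x < y → zlex (g (ofLex x)) (g (ofLex y)) := by
      intro x y hxy
      obtain ⟨n, hn, hlt⟩ := Finsupp.Lex.lt_iff.mp hxy
      refine ⟨emb n, by simpa [hgdef, Finsupp.embDomain_apply] using hlt, ?_⟩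
      intro ℓ' hℓ'
      by_cases hr : ℓ' ∈ Set.range emb
      · obtain ⟨m, rfl⟩ := hr
        have hmn : m < n := e.map_rel_iff.mp hℓ'
        simp [hgdef, Finsupp.embDomain_apply, hn m hmn]
      · rw [hgdef, Finsupp.embDomain_notin_range _ _ _ hr,
          Finsupp.embDomain_notin_range _ _ _ hr]
    refine hsc ⟨fun q => g (ofLex (iso q)), fun q q' => ?_⟩
    constructor
    · intro h
      exact key _ _ (iso.lt_iff_lt.mpr h)
    · intro h
      rcases lt_trichotomy q q' with hq | hq | hq
      · exact hq
      · subst hq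
        exact absurd h (zlex_irrefl _)
      · exact absurd h (fun h' => zlex_asymm h' (key _ _ (iso.lt_iff_lt.mpr hq)))
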